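/- Let G be a bipartite graph on vertex classes of sizes v and w containing no cycle of length 4 or 6. If w > ⌊v^2/4⌋, then G has at least ⌈w - v^2/4⌉ vertices in the class of size w of degree 0 or 1. -/

import Mathlib

open Finset

private lemma four_cycle' {V : Type*} (G : SimpleGraph V) {a b c d : V}
    (h1 : G.Adj a b) (h2 : G.Adj b c) (h3 : G.Adj c d) (h4 : G.Adj d a)
    (hac : a ≠ c) (hbd : b ≠ d) :
    ∃ (x : V) (cyc : G.Walk x x), cyc.IsCycle ∧ cyc.length = 4 := by
  refine ⟨a, .cons h1 (.cons h2 (.cons h3 (.cons h4 .nil))), ?_, rfl⟩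
  have := h1.ne; have := h2.ne; have := h3.ne; have := h4.ne
  simp [SimpleGraph.Walk.isCycle_def, SimpleGraph.Walk.isTrail_def, Sym2.eq_iff, *]
  aesop

private lemma six_cycle' {V : Type*} (G : SimpleGraph V) {a b c d e f : V}
    (h1 : G.Adj a b) (h2 : G.Adj b c) (h3 : G.Adj c d) (h4 : G.Adj d e)
    (h5 : G.Adj e f) (h6 : G.Adj f a)
    (hac : a ≠ c) (hae : a ≠ e) (hce : c ≠ e)
    (hbd : b ≠ d) (hbf : b ≠ f) (hdf : d ≠ f)
    (had : a ≠ d) (hbe : b ≠ e) (hcf : c ≠ f) :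
    ∃ (x : V) (cyc : G.Walk x x), cyc.IsCycle ∧ cyc.length = 6 := by
  refine ⟨a, .cons h1 (.cons h2 (.cons h3 (.cons h4 (.cons h5 (.cons h6 .nil))))), ?_, rfl⟩
  have := h1.ne; have := h2.ne; have := h3.ne; have := h4.ne; have := h5.ne; have := h6.ne
  simp [SimpleGraph.Walk.isCycle_def, SimpleGraph.Walk.isTrail_def, Sym2.eq_iff, *]
  aesop

private lemma mantel' {n : ℕ} (H : SimpleGraph (Fin n)) [DecidableRel H.Adj]
    (tf : ∀ x y z, H.Adj x y → H.Adj y z → H.Adj x z → False) :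
    4 * #H.edgeFinset ≤ n ^ 2 := by
  classical
  have key : ∀ ⦃x y⦄, H.Adj x y → H.degree x + H.degree y ≤ n := by
    intro x y hxy
    have hdisj : Disjoint (H.neighborFinset x) (H.neighborFinset y) := by
      rw [Finset.disjoint_left]
      intro z hz hz'
      rw [SimpleGraph.mem_neighborFinset] at hz hz'
      exact tf x y z hxy hz' hz
    calc H.degree x + H.degree y
        = #(H.neighborFinset x ∪ H.neighborFinset y) := by
          rw [Finset.card_union_of_disjoint hdisj]; rfl
      _ ≤ #(univ : Finset (Fin n)) := Finset.card_le_card (Finset.subset_univ _)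
      _ = n := by simp
  set m := #H.edgeFinset with hm
  have hfst : ∑ d : H.Dart, H.degree d.fst = ∑ x : Fin n, H.degree x ^ 2 := by
    rw [← Finset.sum_fiberwise (univ : Finset H.Dart) (fun d => d.fst) (fun d => H.degree d.fst)]
    refine Finset.sum_congr rfl fun x _ => ?_
    rw [Finset.sum_congr rfl (fun d hd => by
      simp only [Finset.mem_filter] at hd; rw [hd.2]), Finset.sum_const,
      SimpleGraph.dart_fst_fiber_card_eq_degree]
    ring
  have hsnd : ∑ d : H.Dart, H.degree d.snd = ∑ x : Fin n, H.degree x ^ 2 := by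
    rw [← hfst]
    exact Fintype.sum_equiv ⟨SimpleGraph.Dart.symm, SimpleGraph.Dart.symm,
      SimpleGraph.Dart.symm_symm, SimpleGraph.Dart.symm_symm⟩ _ _ (fun d => rfl)
  have hdeg2 : 2 * ∑ x : Fin n, H.degree x ^ 2 ≤ n * (2 * m) := by
    calc 2 * ∑ x : Fin n, H.degree x ^ 2
        = ∑ d : H.Dart, (H.degree d.fst + H.degree d.snd) := by
          rw [Finset.sum_add_distrib, hfst, hsnd]; ring
      _ ≤ ∑ _d : H.Dart, n := Finset.sum_le_sum fun d _ => key d.adj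
      _ = Fintype.card H.Dart * n := by rw [Finset.sum_const]; simp [mul_comm]
      _ = n * (2 * m) := by rw [SimpleGraph.dart_card_eq_twice_card_edges]; ring
  have hcs : (2 * m) ^ 2 ≤ n * ∑ x : Fin n, H.degree x ^ 2 := by
    calc (2 * m) ^ 2 = (∑ x : Fin n, H.degree x) ^ 2 := by
          rw [H.sum_degrees_eq_twice_card_edges]
      _ ≤ #(univ : Finset (Fin n)) * ∑ x : Fin n, H.degree x ^ 2 :=
          sq_sum_le_card_mul_sum_sq
      _ = n * ∑ x : Fin n, H.degree x ^ 2 := by simp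
  rcases Nat.eq_zero_or_pos m with h0 | h0
  · rw [h0]; positivity
  · have : 2 * (2 * m) ^ 2 ≤ n * (n * (2 * m)) :=
      le_trans (by nlinarith) (Nat.mul_le_mul_left n hdeg2)
    have h2 : (4 * m) * (2 * m) ≤ n ^ 2 * (2 * m) := by nlinarith
    exact Nat.le_of_mul_le_mul_right h2 (by omega)

theorem stmt_4 (v w : ℕ) (G : SimpleGraph (Fin v ⊕ Fin w)) [DecidableRel G.Adj]
    (hbip : ∀ x y, G.Adj x y → x.isLeft ≠ y.isLeft)
    (h4 : ∀ (x) (c : G.Walk x x), c.IsCycle → c.length ≠ 4)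
    (h6 : ∀ (x) (c : G.Walk x x), c.IsCycle → c.length ≠ 6)
    (hw : w > v^2 / 4) :
    ⌈(w : ℚ) - (v : ℚ)^2 / 4⌉ ≤
      ((Finset.univ.filter (fun b : Fin w => G.degree (Sum.inr b) ≤ 1)).card : ℤ) := by
  classical
  have hnb : ∀ (b : Fin w) (x : Fin v ⊕ Fin w), G.Adj (Sum.inr b) x →
      ∃ a : Fin v, x = Sum.inl a := by
    intro b x hx
    have := hbip _ _ hx
    cases x with
    | inl a => exact ⟨a, rfl⟩
    | inr b' => simp at this
  set S := Finset.univ.filter (fun b : Fin w => 2 ≤ G.degree (Sum.inr b)) with hS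
  have hfin : #(Finset.univ.filter (fun b : Fin w => G.degree (Sum.inr b) ≤ 1)) + #S = w := by
    have hSeq : S = Finset.univ.filter (fun b : Fin w => ¬ G.degree (Sum.inr b) ≤ 1) := by
      rw [hS]
      apply Finset.filter_congr
      intro b _
      exact (by omega : 2 ≤ G.degree (Sum.inr b) ↔ ¬ G.degree (Sum.inr b) ≤ 1)
    rw [hSeq, Finset.card_filter_add_card_filter_not, Finset.card_univ, Fintype.card_fin]
  -- choose two distinct left neighbors for each b ∈ S
  have key : ∀ b ∈ S, ∃ a1 a2 : Fin v, a1 ≠ a2 ∧ G.Adj (Sum.inr b) (Sum.inl a1) ∧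
      G.Adj (Sum.inr b) (Sum.inl a2) := by
    intro b hb
    rw [hS, Finset.mem_filter] at hb
    have h2 : 1 < #(G.neighborFinset (Sum.inr b)) := hb.2
    obtain ⟨x, hx, y, hy, hxy⟩ := Finset.one_lt_card.mp h2
    rw [SimpleGraph.mem_neighborFinset] at hx hy
    obtain ⟨a1, rfl⟩ := hnb b x hx
    obtain ⟨a2, rfl⟩ := hnb b y hy
    exact ⟨a1, a2, by simpa using hxy, hx, hy⟩
  choose f1 f2 hne ha1 ha2 using key
  set H : SimpleGraph (Fin v) :=
    SimpleGraph.fromEdgeSet {e | ∃ b, ∃ hb : b ∈ S, e = s(f1 b hb, f2 b hb)} with hH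
  haveI : DecidableRel H.Adj := Classical.decRel _
  have hadj : ∀ ⦃x y : Fin v⦄, H.Adj x y → ∃ b, ∃ hb : b ∈ S,
      G.Adj (Sum.inr b) (Sum.inl x) ∧ G.Adj (Sum.inr b) (Sum.inl y) := by
    intro x y hxy
    rw [hH, SimpleGraph.fromEdgeSet_adj] at hxy
    obtain ⟨⟨b, hb, he⟩, hne'⟩ := hxy
    rw [Sym2.eq_iff] at he
    rcases he with ⟨h1, h2⟩ | ⟨h1, h2⟩
    · exact ⟨b, hb, by rw [h1]; exact ha1 _ _, by rw [h2]; exact ha2 _ _⟩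
    · exact ⟨b, hb, by rw [h1]; exact ha2 _ _, by rw [h2]; exact ha1 _ _⟩
  -- which b witnesses an edge
  have hwit : ∀ ⦃x y : Fin v⦄, H.Adj x y → ∃ b, ∃ hb : b ∈ S,
      s(f1 b hb, f2 b hb) = s(x, y) := by
    intro x y hxy
    rw [hH, SimpleGraph.fromEdgeSet_adj] at hxy
    obtain ⟨⟨b, hb, he⟩, _⟩ := hxy
    exact ⟨b, hb, he.symm⟩
  -- triangle-free
  have tf : ∀ x y z, H.Adj x y → H.Adj y z → H.Adj x z → False := by
    intro x y z hxy hyz hxz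
    obtain ⟨b1, hb1, hb1x, hb1y⟩ := hadj hxy
    obtain ⟨b2, hb2, hb2y, hb2z⟩ := hadj hyz
    obtain ⟨b3, hb3, hb3x, hb3z⟩ := hadj hxz
    obtain ⟨c1, hc1, he1⟩ := hwit hxy
    obtain ⟨c2, hc2, he2⟩ := hwit hyz
    obtain ⟨c3, hc3, he3⟩ := hwit hxz
    have hxyne := hxy.ne
    have hyzne := hyz.ne
    have hxzne := hxz.ne
    have hc1x : G.Adj (Sum.inr c1) (Sum.inl x) ∧ G.Adj (Sum.inr c1) (Sum.inl y) := by
      rcases Sym2.eq_iff.mp he1 with ⟨h1, h2⟩ | ⟨h1, h2⟩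
      · exact ⟨by rw [← h1]; exact ha1 _ _, by rw [← h2]; exact ha2 _ _⟩
      · exact ⟨by rw [← h2]; exact ha2 _ _, by rw [← h1]; exact ha1 _ _⟩
    have hc2y : G.Adj (Sum.inr c2) (Sum.inl y) ∧ G.Adj (Sum.inr c2) (Sum.inl z) := by
      rcases Sym2.eq_iff.mp he2 with ⟨h1, h2⟩ | ⟨h1, h2⟩
      · exact ⟨by rw [← h1]; exact ha1 _ _, by rw [← h2]; exact ha2 _ _⟩
      · exact ⟨by rw [← h2]; exact ha2 _ _, by rw [← h1]; exact ha1 _ _⟩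
    have hc3x : G.Adj (Sum.inr c3) (Sum.inl x) ∧ G.Adj (Sum.inr c3) (Sum.inl z) := by
      rcases Sym2.eq_iff.mp he3 with ⟨h1, h2⟩ | ⟨h1, h2⟩
      · exact ⟨by rw [← h1]; exact ha1 _ _, by rw [← h2]; exact ha2 _ _⟩
      · exact ⟨by rw [← h2]; exact ha2 _ _, by rw [← h1]; exact ha1 _ _⟩
    have h12 : c1 ≠ c2 := by
      rintro rfl
      have hh := he1.symm.trans he2
      rcases Sym2.eq_iff.mp hh with ⟨h, _⟩ | ⟨h, _⟩
      · exact hxyne h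
      · exact hxzne h
    have h13 : c1 ≠ c3 := by
      rintro rfl
      have hh := he1.symm.trans he3
      rcases Sym2.eq_iff.mp hh with ⟨_, h⟩ | ⟨h1, _⟩
      · exact hyzne h
      · exact hxzne h1
    have h23 : c2 ≠ c3 := by
      rintro rfl
      have hh := he2.symm.trans he3
      rcases Sym2.eq_iff.mp hh with ⟨h, _⟩ | ⟨h, _⟩
      · exact hxyne h.symm
      · exact hyzne h
    obtain ⟨xx, cyc, hc, hl⟩ := six_cycle' G hc1x.1.symm hc1x.2 hc2y.1.symm hc2y.2
      hc3x.2.symm hc3x.1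
      (by simp [hxyne]) (by simp [hxzne]) (by simp [hyzne])
      (by simp [h12]) (by simp [h13]) (by simp [h23])
      (by simp) (by simp) (by simp)
    exact h6 xx cyc hc hl
  -- injection from S into edges of H
  have hmap : ∀ b (hb : b ∈ S), s(f1 b hb, f2 b hb) ∈ H.edgeFinset := by
    intro b hb
    rw [SimpleGraph.mem_edgeFinset, SimpleGraph.mem_edgeSet, hH,
      SimpleGraph.fromEdgeSet_adj]
    exact ⟨⟨b, hb, rfl⟩, hne b hb⟩
  have hcard2 : #S ≤ #H.edgeFinset := by
    rw [← Finset.card_attach (s := S)]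
    apply Finset.card_le_card_of_injOn (fun b => s(f1 b.1 b.2, f2 b.1 b.2))
    · intro b _
      exact hmap b.1 b.2
    · intro b _ b' _ heq
      by_contra hne'
      have hbb : b.1 ≠ b'.1 := fun h => hne' (Subtype.ext h)
      have hb'adj : G.Adj (Sum.inr b'.1) (Sum.inl (f1 b.1 b.2)) ∧
          G.Adj (Sum.inr b'.1) (Sum.inl (f2 b.1 b.2)) := by
        rcases Sym2.eq_iff.mp heq with ⟨h1, h2⟩ | ⟨h1, h2⟩
        · exact ⟨by rw [h1]; exact ha1 _ _, by rw [h2]; exact ha2 _ _⟩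
        · exact ⟨by rw [h1]; exact ha2 _ _, by rw [h2]; exact ha1 _ _⟩
      obtain ⟨xx, cyc, hc, hl⟩ := four_cycle' G (ha1 b.1 b.2).symm (ha2 b.1 b.2)
        hb'adj.2.symm hb'adj.1
        (by simp [hne b.1 b.2]) (by simp [hbb])
      exact h4 xx cyc hc hl
  have hmain : 4 * #S ≤ v ^ 2 := by
    refine le_trans (Nat.mul_le_mul_left 4 hcard2) ?_
    convert mantel' H tf using 4
    rfl
  have hle : #S ≤ w := by omega
  rw [Int.ceil_le]
  have h1 : (#(Finset.univ.filter (fun b : Fin w => G.degree (Sum.inr b) ≤ 1)) : ℚ) + #S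
      = w := by exact_mod_cast congrArg (Nat.cast : ℕ → ℚ) hfin
  have h2 : 4 * (#S : ℚ) ≤ (v : ℚ) ^ 2 := by exact_mod_cast hmain
  push_cast
  linarith
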